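/- arXiv:1802.06387 — 2 statements merged into one kernel-verified Lean document; each statement's English description precedes it below -/
import Mathlib

section
/- Let N ≥ 1, let S₁,…,S_N be finite nonempty index sets, let (Ω, 𝔄, ν) be a probability space, and for each site n and each setting s ∈ Sₙ let ω ↦ P_{n,s}(·|ω) be a Markov kernel from Ω to the interval [-1,1]. For each tuple of settings s = (s₁,…,s_N) let f_s : [-1,1]^N → ℝ be a bounded measurable function. Define the scenario value B = Σ_s ∫_Ω [∫_{[-1,1]^N} f_s d(P_{1,s₁}(·|ω) ⊗ ⋯ ⊗ P_{N,s_N}(·|ω))] dν(ω). Then B_Φ^inf ≤ B ≤ B_Φ^sup, where B_Φ^sup (respectively B_Φ^inf) is the supremum (respectively infimum), over all families of points λₙ^{(s)} ∈ [-1,1] for n = 1,…,N and s ∈ Sₙ, of Σ_s f_s(λ₁^{(s₁)},…,λ_N^{(s_N)}). -/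
open MeasureTheory ProbabilityTheory

set_option linter.unusedVariables false

open Set

namespace LHVAux

variable {ι : Type} [Fintype ι] {X : ι → Type} [∀ i, MeasurableSpace (X i)]

/-- Measurability in `ω` of the product measure of Markov kernels, on each measurable set. -/
lemma measurable_pi_kernel {Ω : Type} [MeasurableSpace Ω]
    (κ : ∀ i, Kernel Ω (X i)) [hκ : ∀ i, IsMarkovKernel (κ i)]
    {A : Set (∀ i, X i)} (hA : MeasurableSet A) :
    Measurable fun ω => Measure.pi (fun i => κ i ω) A := by
  refine MeasurableSpace.induction_on_inter
    (C := fun A _ => Measurable fun ω => Measure.pi (fun i => κ i ω) A)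
    (s := pi univ '' pi univ fun i => { s : Set (X i) | MeasurableSet s})
    generateFrom_pi.symm isPiSystem_pi (by simp) ?_ ?_ ?_ _ hA
  · rintro t ⟨s, hs, rfl⟩
    rw [Set.mem_univ_pi] at hs
    simp_rw [Measure.pi_pi]
    exact Finset.measurable_prod _ fun i _ => Kernel.measurable_coe (κ i) (hs i)
  · intro t htm ht
    have : ∀ ω, Measure.pi (fun i => κ i ω) tᶜ = 1 - Measure.pi (fun i => κ i ω) t := by
      intro ω
      rw [measure_compl htm (measure_ne_top _ t), measure_univ]
    simp_rw [this]
    exact Measurable.const_sub ht 1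
  · intro g hdis hgm hg
    have : ∀ ω, Measure.pi (fun i => κ i ω) (⋃ n, g n)
        = ∑' n, Measure.pi (fun i => κ i ω) (g n) := fun ω => measure_iUnion hdis hgm
    simp_rw [this]
    exact Measurable.ennreal_tsum hg

/-- The product of Markov kernels, as a kernel into the product space. -/
noncomputable def piKernel {Ω : Type} [MeasurableSpace Ω]
    (κ : ∀ i, Kernel Ω (X i)) [hκ : ∀ i, IsMarkovKernel (κ i)] :
    Kernel Ω (∀ i, X i) where
  toFun := fun ω => Measure.pi fun i => κ i ω
  measurable' := Measure.measurable_of_measurable_coe _ fun _ hA => measurable_pi_kernel κ hA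

lemma piKernel_apply {Ω : Type} [MeasurableSpace Ω]
    (κ : ∀ i, Kernel Ω (X i)) [hκ : ∀ i, IsMarkovKernel (κ i)] (ω : Ω) :
    piKernel κ ω = Measure.pi fun i => κ i ω := rfl

instance {Ω : Type} [MeasurableSpace Ω]
    (κ : ∀ i, Kernel Ω (X i)) [hκ : ∀ i, IsMarkovKernel (κ i)] :
    IsMarkovKernel (piKernel κ) :=
  ⟨fun ω => by rw [piKernel_apply]; infer_instance⟩

/-- Pushforward of a product probability measure under componentwise maps. -/
lemma pi_map_pi (μ : ∀ i, Measure (X i)) [∀ i, IsProbabilityMeasure (μ i)]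
    {Y : ι → Type} [∀ i, MeasurableSpace (Y i)]
    (g : ∀ i, X i → Y i) (hg : ∀ i, Measurable (g i)) :
    Measure.map (fun x i => g i (x i)) (Measure.pi μ)
      = Measure.pi fun i => Measure.map (g i) (μ i) := by
  haveI : ∀ i, IsProbabilityMeasure (Measure.map (g i) (μ i)) :=
    fun i => Measure.isProbabilityMeasure_map (hg i).aemeasurable
  have hbig : Measurable fun (x : ∀ i, X i) i => g i (x i) :=
    measurable_pi_lambda _ fun i => (hg i).comp (measurable_pi_apply i)
  refine (Measure.pi_eq fun s hs => ?_).symm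
  rw [Measure.map_apply hbig (MeasurableSet.univ_pi hs)]
  have : (fun (x : ∀ i, X i) i => g i (x i)) ⁻¹' Set.pi univ s
      = Set.pi univ fun i => g i ⁻¹' s i := by
    ext x; simp [Set.mem_pi]
  rw [this, Measure.pi_pi]
  exact Finset.prod_congr rfl fun i _ => (Measure.map_apply (hg i) (hs i)).symm

/-- Marginal of a product probability measure at one coordinate. -/
lemma map_eval_pi (μ : ∀ i, Measure (X i)) [∀ i, IsProbabilityMeasure (μ i)] (i₀ : ι) :
    Measure.map (Function.eval i₀) (Measure.pi μ) = μ i₀ := by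
  classical
  ext A hA
  rw [Measure.map_apply (measurable_pi_apply i₀) hA, Set.eval_preimage, Measure.pi_pi]
  rw [Finset.prod_eq_single i₀ (fun b _ hb => by
      rw [Function.update_of_ne hb]; exact measure_univ)
    (fun h => absurd (Finset.mem_univ i₀) h), Function.update_self]

end LHVAux

open LHVAux


open LHVAux


/-- tight LHV constraint: if all joint probability distributions of a correlation
scenario are given by an LHV model with hidden-variable probability space `(Ω, ν)` and Markov
kernels `P n s` from `Ω` to `[-1,1]`, then the scenario value
`B = ∑ s, ∫_Ω (∫ f s d(⊗ₙ P n (s n) ω)) dν(ω)` of any Bell functional given by bounded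
measurable functions `f s : [-1,1]^N → ℝ` satisfies `B_Φ^inf ≤ B ≤ B_Φ^sup`. -/
theorem lhv_scenario_value_mem_Icc_inf_sup
    (N : ℕ) (hN : 1 ≤ N)
    (S : Fin N → Type) [∀ n, Fintype (S n)] [∀ n, Nonempty (S n)]
    {Ω : Type} [MeasurableSpace Ω] (ν : Measure Ω) [IsProbabilityMeasure ν]
    (P : ∀ n, S n → Kernel Ω (Set.Icc (-1 : ℝ) 1))
    (hP : ∀ n s, IsMarkovKernel (P n s))
    (f : (∀ n, S n) → ((Fin N → Set.Icc (-1 : ℝ) 1) → ℝ))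
    (hmeas : ∀ s, Measurable (f s))
    (hbdd : ∀ s, ∃ C : ℝ, ∀ lam, |f s lam| ≤ C) :
    (⨅ lam : ∀ n, S n → Set.Icc (-1 : ℝ) 1,
        ∑ s : ∀ n, S n, f s (fun n => lam n (s n))) ≤
      (∑ s : ∀ n, S n,
        ∫ ω, (∫ lam, f s lam ∂(Measure.pi fun n => P n (s n) ω)) ∂ν) ∧
    (∑ s : ∀ n, S n,
        ∫ ω, (∫ lam, f s lam ∂(Measure.pi fun n => P n (s n) ω)) ∂ν) ≤
      ⨆ lam : ∀ n, S n → Set.Icc (-1 : ℝ) 1,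
        ∑ s : ∀ n, S n, f s (fun n => lam n (s n)) := by
  classical
  haveI : ∀ n s, IsMarkovKernel (P n s) := hP
  haveI : Nonempty (Set.Icc (-1 : ℝ) 1) := ⟨⟨0, by norm_num⟩⟩
  choose C hC using hbdd
  set g : (∀ n, S n → Set.Icc (-1 : ℝ) 1) → ℝ :=
    fun lam => ∑ s : ∀ n, S n, f s (fun n => lam n (s n)) with hgdef
  have hgbd : ∀ lam, |g lam| ≤ ∑ s : ∀ n, S n, C s := fun lam =>
    (Finset.abs_sum_le_sum_abs _ _).trans (Finset.sum_le_sum fun s _ => hC s _)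
  have hbddA : BddAbove (Set.range g) :=
    ⟨∑ s : ∀ n, S n, C s, by rintro _ ⟨lam, rfl⟩; exact (abs_le.mp (hgbd lam)).2⟩
  have hbddB : BddBelow (Set.range g) :=
    ⟨-∑ s : ∀ n, S n, C s, by rintro _ ⟨lam, rfl⟩; exact (abs_le.mp (hgbd lam)).1⟩
  set H : (∀ n, S n) → Ω → ℝ :=
    fun s ω => ∫ lam, f s lam ∂(Measure.pi fun n => P n (s n) ω) with hHdef
  -- measurability of H s
  have hHmeas : ∀ s, StronglyMeasurable (H s) := by
    intro s
    have h1 : StronglyMeasurable fun ω => ∫ y, f s y ∂((piKernel fun n => P n (s n)) ω) := by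
      refine MeasureTheory.StronglyMeasurable.integral_kernel_prod_right
        (κ := piKernel fun n => P n (s n)) (f := fun _ y => f s y) ?_
      exact ((hmeas s).comp measurable_snd).stronglyMeasurable
    simpa [piKernel_apply, hHdef] using h1
  have hHbd : ∀ s ω, |H s ω| ≤ C s := by
    intro s ω
    haveI : ∀ n, IsProbabilityMeasure (P n (s n) ω) :=
      fun n => (hP n (s n)).isProbabilityMeasure ω
    have := norm_integral_le_of_norm_le_const
      (μ := Measure.pi fun n => P n (s n) ω) (f := f s) (C := C s)
      (ae_of_all _ fun lam => by rw [Real.norm_eq_abs]; exact hC s lam)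
    simpa [Real.norm_eq_abs, measure_univ] using this
  have hHint : ∀ s, Integrable (H s) ν := fun s =>
    Integrable.mono' (integrable_const (C s)) (hHmeas s).aestronglyMeasurable
      (ae_of_all _ fun ω => by rw [Real.norm_eq_abs]; exact hHbd s ω)
  -- the per-ω value is between inf and sup
  have key : ∀ ω, (⨅ lam, g lam) ≤ ∑ s : ∀ n, S n, H s ω ∧
      ∑ s : ∀ n, S n, H s ω ≤ ⨆ lam, g lam := by
    intro ω
    haveI : ∀ (n : Fin N) (t : S n), IsProbabilityMeasure (P n t ω) :=
      fun n t => (hP n t).isProbabilityMeasure ω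
    set μω : Measure (∀ n, S n → Set.Icc (-1 : ℝ) 1) :=
      Measure.pi (fun n => Measure.pi (fun t : S n => P n t ω)) with hμω
    haveI : IsProbabilityMeasure μω := by rw [hμω]; infer_instance
    have hTmeas : ∀ s : ∀ n, S n,
        Measurable fun (Λ : ∀ n, S n → Set.Icc (-1 : ℝ) 1) (n : Fin N) => Λ n (s n) :=
      fun s => measurable_pi_lambda _ fun n =>
        (measurable_pi_apply (s n)).comp (measurable_pi_apply n)
    have hmap : ∀ s : ∀ n, S n,
        Measure.pi (fun n => P n (s n) ω)
          = Measure.map (fun Λ (n : Fin N) => Λ n (s n)) μω := by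
      intro s
      have h2 := pi_map_pi (fun n => Measure.pi fun t : S n => P n t ω)
        (fun n => Function.eval (s n)) (fun n => measurable_pi_apply (s n))
      simp_rw [map_eval_pi] at h2
      exact h2.symm
    have hHs : ∀ s : ∀ n, S n,
        H s ω = ∫ Λ, f s (fun n => Λ n (s n)) ∂μω := by
      intro s
      rw [hHdef]
      simp only
      rw [hmap s, integral_map (hTmeas s).aemeasurable (hmeas s).aestronglyMeasurable]
    have hInt : ∀ s : ∀ n, S n,
        Integrable (fun Λ => f s (fun n => Λ n (s n))) μω := fun s =>
      Integrable.mono' (integrable_const (C s))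
        ((hmeas s).comp (hTmeas s)).aestronglyMeasurable
        (ae_of_all _ fun Λ => by rw [Real.norm_eq_abs]; exact hC s _)
    have hsum : ∑ s : ∀ n, S n, H s ω = ∫ Λ, g Λ ∂μω := by
      simp_rw [hHs]
      rw [← integral_finset_sum _ fun s _ => hInt s]
    have hgint : Integrable g μω := by
      rw [hgdef]
      exact integrable_finset_sum _ fun s _ => hInt s
    constructor
    · rw [hsum]
      calc (⨅ lam, g lam) = ∫ _, (⨅ lam, g lam) ∂μω := by simp [measure_univ]
        _ ≤ ∫ Λ, g Λ ∂μω :=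
          integral_mono (integrable_const _) hgint (fun Λ => ciInf_le hbddB Λ)
    · rw [hsum]
      calc ∫ Λ, g Λ ∂μω ≤ ∫ _, (⨆ lam, g lam) ∂μω :=
          integral_mono hgint (integrable_const _) (fun Λ => le_ciSup hbddA Λ)
        _ = ⨆ lam, g lam := by simp [measure_univ]
    -- end key
  have hswap : ∑ s : ∀ n, S n, ∫ ω, H s ω ∂ν = ∫ ω, ∑ s : ∀ n, S n, H s ω ∂ν :=
    (integral_finset_sum _ fun s _ => hHint s).symm
  have hSumInt : Integrable (fun ω => ∑ s : ∀ n, S n, H s ω) ν :=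
    integrable_finset_sum _ fun s _ => hHint s
  constructor
  · rw [hswap]
    calc (⨅ lam, g lam) = ∫ _, (⨅ lam, g lam) ∂ν := by simp [measure_univ]
      _ ≤ ∫ ω, ∑ s : ∀ n, S n, H s ω ∂ν :=
        integral_mono (integrable_const _) hSumInt (fun ω => (key ω).1)
  · rw [hswap]
    calc ∫ ω, ∑ s : ∀ n, S n, H s ω ∂ν ≤ ∫ _, (⨆ lam, g lam) ∂ν :=
        integral_mono hSumInt (integrable_const _) (fun ω => (key ω).2)
      _ = ⨆ lam, g lam := by simp [measure_univ]
end

section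
/- Under the hypotheses of the tight LHV constraint (N ≥ 1 parties, finite setting sets Sₙ, a probability space (Ω, 𝔄, ν), Markov kernels P_{n,s}(·|ω) from Ω to [-1,1], and bounded measurable functions f_s : [-1,1]^N → ℝ), the absolute value of the scenario value B = Σ_s ∫_Ω [∫ f_s d(P_{1,s₁}(·|ω) ⊗ ⋯ ⊗ P_{N,s_N}(·|ω))] dν(ω) satisfies |B| ≤ max{|B_Φ^sup|, |B_Φ^inf|}, where B_Φ^sup and B_Φ^inf are the supremum and infimum over all families of points λₙ^{(s)} ∈ [-1,1] of Σ_s f_s(λ₁^{(s₁)},…,λ_N^{(s_N)}). -/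
open MeasureTheory ProbabilityTheory Set Function

section Aux

variable {Ω : Type} [MeasurableSpace Ω] {ι : Type} [Fintype ι]
  {β : ι → Type} [∀ i, MeasurableSpace (β i)]

lemma LHVaux.measurable_measure_pi (κ : ∀ i, Kernel Ω (β i)) [∀ i, IsMarkovKernel (κ i)] :
    Measurable fun ω => Measure.pi (fun i => κ i ω) := by
  apply Measure.measurable_of_measurable_coe
  intro s hs
  refine MeasurableSpace.induction_on_inter
    (C := fun s _ => Measurable fun ω => Measure.pi (fun i => κ i ω) s)
    (s := pi univ '' pi univ fun i => { t : Set (β i) | MeasurableSet t })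
    generateFrom_pi.symm (IsPiSystem.pi (fun i => MeasurableSpace.isPiSystem_measurableSet)) ?_ ?_ ?_ ?_ s hs
  · simp only [measure_empty]; exact measurable_const
  · rintro t ⟨t', ht', rfl⟩
    simp only [mem_univ_pi, mem_setOf_eq] at ht'
    have : (fun ω => Measure.pi (fun i => κ i ω) (pi univ t'))
        = fun ω => ∏ i, κ i ω (t' i) := by
      funext ω; exact Measure.pi_pi _ _
    rw [this]
    exact Finset.measurable_prod _ fun i _ => Kernel.measurable_coe _ (ht' i)
  · intro t ht hmt
    have : (fun ω => Measure.pi (fun i => κ i ω) tᶜ)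
        = fun ω => 1 - Measure.pi (fun i => κ i ω) t := by
      funext ω
      rw [measure_compl ht (measure_ne_top _ _)]
      simp
    rw [this]
    exact Measurable.const_sub hmt 1
  · intro g hdis hmeas hC
    have : (fun ω => Measure.pi (fun i => κ i ω) (⋃ n, g n))
        = fun ω => ∑' n, Measure.pi (fun i => κ i ω) (g n) := by
      funext ω; exact measure_iUnion hdis hmeas
    rw [this]
    exact Measurable.ennreal_tsum hC

noncomputable def LHVaux.piKernel (κ : ∀ i, Kernel Ω (β i)) [∀ i, IsMarkovKernel (κ i)] :
    Kernel Ω (∀ i, β i) :=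
  ⟨fun ω => Measure.pi (fun i => κ i ω), LHVaux.measurable_measure_pi κ⟩

@[simp] lemma LHVaux.piKernel_apply (κ : ∀ i, Kernel Ω (β i)) [∀ i, IsMarkovKernel (κ i)]
    (ω : Ω) : LHVaux.piKernel κ ω = Measure.pi (fun i => κ i ω) := rfl

instance LHVaux.piKernel.isMarkovKernel (κ : ∀ i, Kernel Ω (β i)) [∀ i, IsMarkovKernel (κ i)] :
    IsMarkovKernel (LHVaux.piKernel κ) :=
  ⟨fun ω => by rw [LHVaux.piKernel_apply]; infer_instance⟩

lemma LHVaux.measurePreserving_eval (μ : ∀ i, Measure (β i)) [∀ i, IsProbabilityMeasure (μ i)]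
    (i : ι) : MeasurePreserving (Function.eval i) (Measure.pi μ) (μ i) := by
  classical
  refine ⟨measurable_pi_apply i, ?_⟩
  ext s hs
  rw [Measure.map_apply (measurable_pi_apply i) hs, Set.eval_preimage, Measure.pi_pi]
  refine Finset.prod_eq_single_of_mem i (Finset.mem_univ i) ?_ |>.trans (by simp)
  intro j _ hj
  simp [Function.update_of_ne hj]

lemma LHVaux.measurable_integral_kernel {γ : Type} [MeasurableSpace γ]
    (κ : Kernel Ω γ) [IsSFiniteKernel κ] {g : γ → ℝ} (hg : StronglyMeasurable g) :
    Measurable fun ω => ∫ x, g x ∂κ ω := by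
  have : StronglyMeasurable (Function.uncurry fun (_ : Ω) (x : γ) => g x) :=
    hg.comp_measurable measurable_snd
  exact (this.integral_kernel_prod_right (κ := κ)).measurable

end Aux

/-- under the hypotheses of the tight LHV constraint, the absolute value of the
LHV scenario value `B = ∑ s, ∫_Ω (∫ f s d(⊗ₙ P n (s n) ω)) dν(ω)` of a Bell functional
satisfies `|B| ≤ max {|B_Φ^sup|, |B_Φ^inf|}`. -/
theorem abs_lhv_scenario_value_le_max_abs_sup_abs_inf
    (N : ℕ) (hN : 1 ≤ N)
    (S : Fin N → Type) [∀ n, Fintype (S n)] [∀ n, Nonempty (S n)]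
    {Ω : Type} [MeasurableSpace Ω] (ν : Measure Ω) [IsProbabilityMeasure ν]
    (P : ∀ n, S n → Kernel Ω (Set.Icc (-1 : ℝ) 1))
    (hP : ∀ n s, IsMarkovKernel (P n s))
    (f : (∀ n, S n) → ((Fin N → Set.Icc (-1 : ℝ) 1) → ℝ))
    (hmeas : ∀ s, Measurable (f s))
    (hbdd : ∀ s, ∃ C : ℝ, ∀ lam, |f s lam| ≤ C) :
    |∑ s : ∀ n, S n,
        ∫ ω, (∫ lam, f s lam ∂(Measure.pi fun n => P n (s n) ω)) ∂ν| ≤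
      max
        |⨆ lam : ∀ n, S n → Set.Icc (-1 : ℝ) 1,
            ∑ s : ∀ n, S n, f s (fun n => lam n (s n))|
        |⨅ lam : ∀ n, S n → Set.Icc (-1 : ℝ) 1,
            ∑ s : ∀ n, S n, f s (fun n => lam n (s n))| := by
  classical
  haveI : Nonempty (Set.Icc (-1 : ℝ) 1) := ⟨⟨0, by norm_num⟩⟩
  haveI : ∀ n s, IsMarkovKernel (P n s) := hP
  choose C hC using hbdd
  set Q : Kernel Ω (∀ n, S n → Set.Icc (-1 : ℝ) 1) :=
    LHVaux.piKernel (fun n => LHVaux.piKernel (fun s : S n => P n s)) with hQ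
  haveI : IsMarkovKernel Q := by rw [hQ]; infer_instance
  set e : (∀ n, S n) → (∀ n, S n → Set.Icc (-1 : ℝ) 1) → (Fin N → Set.Icc (-1 : ℝ) 1) :=
    fun s lam n => lam n (s n) with he
  have he_meas : ∀ s, Measurable (e s) := fun s =>
    measurable_pi_lambda _ fun n =>
      (measurable_pi_apply (s n)).comp (measurable_pi_apply n)
  have hpush : ∀ (s : ∀ n, S n) (ω : Ω),
      MeasurePreserving (e s) (Q ω) (Measure.pi fun n => P n (s n) ω) := by
    intro s ω
    rw [hQ, LHVaux.piKernel_apply]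
    exact measurePreserving_pi _ _
      (fun n => LHVaux.measurePreserving_eval (fun t : S n => P n t ω) (s n))
  have hint_eq : ∀ (s : ∀ n, S n) (ω : Ω),
      (∫ lam, f s lam ∂(Measure.pi fun n => P n (s n) ω))
        = ∫ lam, f s (e s lam) ∂(Q ω) := by
    intro s ω
    rw [← (hpush s ω).map_eq,
      integral_map (he_meas s).aemeasurable
        ((hmeas s).stronglyMeasurable.aestronglyMeasurable)]
  set g : (∀ n, S n → Set.Icc (-1 : ℝ) 1) → ℝ :=
    fun lam => ∑ s : ∀ n, S n, f s (fun n => lam n (s n)) with hg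
  have hg_bdd : ∀ lam, |g lam| ≤ ∑ s : ∀ n, S n, C s := fun lam =>
    (Finset.abs_sum_le_sum_abs _ _).trans (Finset.sum_le_sum fun s _ => hC s _)
  have hbddAbove : BddAbove (Set.range g) := by
    refine ⟨∑ s : ∀ n, S n, C s, ?_⟩
    rintro x ⟨lam, rfl⟩
    exact (le_abs_self _).trans (hg_bdd lam)
  have hbddBelow : BddBelow (Set.range g) := by
    refine ⟨-∑ s : ∀ n, S n, C s, ?_⟩
    rintro x ⟨lam, rfl⟩
    exact neg_le_of_abs_le (hg_bdd lam)
  set Bsup := ⨆ lam : ∀ n, S n → Set.Icc (-1 : ℝ) 1, g lam with hBsup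
  set Binf := ⨅ lam : ∀ n, S n → Set.Icc (-1 : ℝ) 1, g lam with hBinf
  set M := max |Bsup| |Binf| with hM
  have hg_le : ∀ lam, g lam ≤ Bsup := fun lam => le_ciSup hbddAbove lam
  have hg_ge : ∀ lam, Binf ≤ g lam := fun lam => ciInf_le hbddBelow lam
  have hint_f : ∀ (s : ∀ n, S n) (ω : Ω), Integrable (fun lam => f s (e s lam)) (Q ω) := by
    intro s ω
    refine ⟨((hmeas s).comp (he_meas s)).aestronglyMeasurable, ?_⟩
    exact HasFiniteIntegral.of_bounded (C := C s)
      (Filter.Eventually.of_forall fun lam => by simpa using hC s (e s lam))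
  have hsum_eq : ∀ ω : Ω,
      (∑ s : ∀ n, S n, ∫ lam, f s lam ∂(Measure.pi fun n => P n (s n) ω))
        = ∫ lam, g lam ∂(Q ω) := by
    intro ω
    rw [hg]
    simp_rw [hint_eq _ ω]
    rw [← integral_finset_sum _ (fun s _ => hint_f s ω)]
  have hg_int : ∀ ω, Integrable g (Q ω) := by
    intro ω
    refine ⟨?_, ?_⟩
    · have : Measurable g := by
        rw [hg]
        refine Finset.measurable_sum Finset.univ fun s _ => ?_
        exact (hmeas s).comp (he_meas s)
      exact this.aestronglyMeasurable
    · exact HasFiniteIntegral.of_bounded (C := ∑ s : ∀ n, S n, C s)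
        (Filter.Eventually.of_forall fun lam => by simpa using hg_bdd lam)
  have hM_nonneg : (0:ℝ) ≤ M := le_trans (abs_nonneg _) (le_max_left _ _)
  have hpt : ∀ ω : Ω,
      |∑ s : ∀ n, S n, ∫ lam, f s lam ∂(Measure.pi fun n => P n (s n) ω)| ≤ M := by
    intro ω
    rw [hsum_eq ω, abs_le]
    constructor
    · have h1 : Binf ≤ ∫ lam, g lam ∂(Q ω) := by
        calc Binf = ∫ _, Binf ∂(Q ω) := by simp
        _ ≤ ∫ lam, g lam ∂(Q ω) :=
          integral_mono (integrable_const _) (hg_int ω) hg_ge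
      have h2 : -M ≤ Binf := by
        rw [neg_le]
        exact le_trans (neg_le_abs Binf) (le_max_right _ _)
      linarith
    · have h2 : ∫ lam, g lam ∂(Q ω) ≤ Bsup := by
        calc ∫ lam, g lam ∂(Q ω) ≤ ∫ _, Bsup ∂(Q ω) :=
          integral_mono (hg_int ω) (integrable_const _) hg_le
        _ = Bsup := by simp
      exact h2.trans ((le_abs_self Bsup).trans (le_max_left _ _))
  have hF_meas : ∀ s : ∀ n, S n,
      Measurable fun ω => ∫ lam, f s lam ∂(Measure.pi fun n => P n (s n) ω) := by
    intro s
    have heq : (fun ω => ∫ lam, f s lam ∂(Measure.pi fun n => P n (s n) ω))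
        = fun ω => ∫ lam, f s (e s lam) ∂(Q ω) := funext fun ω => hint_eq s ω
    rw [heq]
    exact LHVaux.measurable_integral_kernel Q
      ((hmeas s).comp (he_meas s)).stronglyMeasurable
  have hF_int : ∀ s : ∀ n, S n,
      Integrable (fun ω => ∫ lam, f s lam ∂(Measure.pi fun n => P n (s n) ω)) ν := by
    intro s
    refine ⟨(hF_meas s).aestronglyMeasurable, ?_⟩
    refine HasFiniteIntegral.of_bounded (C := C s) (Filter.Eventually.of_forall fun ω => ?_)
    rw [Real.norm_eq_abs, hint_eq s ω]
    calc |∫ lam, f s (e s lam) ∂(Q ω)| ≤ C s * ((Q ω) Set.univ).toReal := by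
          simpa [Real.norm_eq_abs] using
            norm_integral_le_of_norm_le_const (μ := Q ω) (f := fun lam => f s (e s lam))
              (C := C s)
              (Filter.Eventually.of_forall fun lam => by
                simpa [Real.norm_eq_abs] using hC s (e s lam))
    _ = C s := by simp
  rw [← integral_finset_sum _ (fun s _ => hF_int s)]
  calc |∫ ω, ∑ s : ∀ n, S n, ∫ lam, f s lam ∂(Measure.pi fun n => P n (s n) ω) ∂ν|
      ≤ M * (ν Set.univ).toReal := by
        simpa [Real.norm_eq_abs] using
          norm_integral_le_of_norm_le_const (μ := ν)
            (f := fun ω => ∑ s : ∀ n, S n, ∫ lam, f s lam ∂(Measure.pi fun n => P n (s n) ω))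
            (C := M)
            (Filter.Eventually.of_forall fun ω => by
              simpa [Real.norm_eq_abs] using hpt ω)
  _ = M := by simp
end
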